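/- Let t, ζ ∈ ℂ with t ≠ 0, ζ ≠ 0, t⁴ + 1 ≠ 0, and set κ = t², u = 2t³/(t⁴ + 1). Assume ζ ≠ κ, ζ ≠ −κ, κζ ≠ 1, κζ ≠ −1. Define X = ζ²·((ζ² − κ²)/(κ²ζ² − 1))², Y = −(ζ − κ)(κζ + 1)/((κζ − 1)(ζ + κ)), and η = (Y + Y⁻¹)·(κ² + 1)². Then −u⁴·(X² + 1)(Y + 1)² + X·Y·(κ² + 1)^{−6}·Q₂(η) = 0, where Q₂(η) = η³ + 2(κ⁴ + 6κ² − 3)η² − 4(κ⁸ − 4κ⁶ + 2κ⁴ + 12κ² − 3)η − 8(κ² + 1)²(κ⁸ + 14κ⁴ − 8κ² + 1). -/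

import Mathlib

private lemma merge_frac (p q r s v w x y z m n : ℂ) :
    -(p / q) * (r / s) * (v / w) + -x / y * z⁻¹ * (m / n) =
      -(p * r * v) / (q * (s * w)) + -(x * m) / (y * (z * n)) := by
  ring

set_option maxHeartbeats 16000000 in
theorem stmt_3 (t ζ : ℂ) (ht : t ≠ 0) (hζ : ζ ≠ 0) (ht4 : t ^ 4 + 1 ≠ 0)
    (κ u : ℂ) (hκ : κ = t ^ 2) (hu : u = 2 * t ^ 3 / (t ^ 4 + 1))
    (h1 : ζ ≠ κ) (h2 : ζ ≠ -κ) (h3 : κ * ζ ≠ 1) (h4 : κ * ζ ≠ -1)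
    (X Y η : ℂ)
    (hX : X = ζ ^ 2 * ((ζ ^ 2 - κ ^ 2) / (κ ^ 2 * ζ ^ 2 - 1)) ^ 2)
    (hY : Y = -((ζ - κ) * (κ * ζ + 1)) / ((κ * ζ - 1) * (ζ + κ)))
    (hη : η = (Y + Y⁻¹) * (κ ^ 2 + 1) ^ 2) :
    -u ^ 4 * (X ^ 2 + 1) * (Y + 1) ^ 2 +
      X * Y * ((κ ^ 2 + 1) ^ 6)⁻¹ *
        (η ^ 3 + 2 * (κ ^ 4 + 6 * κ ^ 2 - 3) * η ^ 2
          - 4 * (κ ^ 8 - 4 * κ ^ 6 + 2 * κ ^ 4 + 12 * κ ^ 2 - 3) * η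
          - 8 * (κ ^ 2 + 1) ^ 2 * (κ ^ 8 + 14 * κ ^ 4 - 8 * κ ^ 2 + 1)) = 0 := by
  have hζκ : ζ - κ ≠ 0 := sub_ne_zero.mpr h1
  have hζκ' : ζ + κ ≠ 0 := fun h => h2 (by linear_combination h)
  have hκζ1 : κ * ζ - 1 ≠ 0 := sub_ne_zero.mpr h3
  have hκζ1' : κ * ζ + 1 ≠ 0 := fun h => h4 (by linear_combination h)
  have hk2 : κ ^ 2 + 1 ≠ 0 := by rw [hκ]; intro h; exact ht4 (by linear_combination h)
  have hden : κ ^ 2 * ζ ^ 2 - 1 ≠ 0 := by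
    have h : κ ^ 2 * ζ ^ 2 - 1 = (κ * ζ - 1) * (κ * ζ + 1) := by ring
    rw [h]; exact mul_ne_zero hκζ1 hκζ1'
  have hu4 : u ^ 4 = 16 * κ ^ 6 / (κ ^ 2 + 1) ^ 4 := by
    have h2' : ((t : ℂ) ^ 2) ^ 2 + 1 ≠ 0 := by
      intro h; exact ht4 (by linear_combination h)
    rw [hu, hκ, div_pow, div_eq_div_iff (pow_ne_zero 4 ht4) (pow_ne_zero 4 h2')]
    ring
  have hYinv : Y⁻¹ = -((κ * ζ - 1) * (ζ + κ)) / ((ζ - κ) * (κ * ζ + 1)) := by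
    apply inv_eq_of_mul_eq_one_right
    rw [hY, div_mul_div_comm, div_eq_one_iff_eq
      (mul_ne_zero (mul_ne_zero hκζ1 hζκ') (mul_ne_zero hζκ hκζ1'))]
    ring
  set a : ℂ := (ζ - κ) * (κ * ζ + 1) with ha_def
  set b : ℂ := (κ * ζ - 1) * (ζ + κ) with hb_def
  have ha : a ≠ 0 := mul_ne_zero hζκ hκζ1'
  have hb : b ≠ 0 := mul_ne_zero hκζ1 hζκ'
  have hηv : η = -((a ^ 2 + b ^ 2) * (κ ^ 2 + 1) ^ 2) / (a * b) := by
    rw [hη, hYinv, hY]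
    field_simp
    ring
  have G1 : X ^ 2 + 1 =
      (ζ ^ 4 * (ζ ^ 2 - κ ^ 2) ^ 4 + (κ ^ 2 * ζ ^ 2 - 1) ^ 4) / (κ ^ 2 * ζ ^ 2 - 1) ^ 4 := by
    rw [hX]
    generalize κ ^ 2 * ζ ^ 2 - 1 = D at hden ⊢
    field_simp
  have G2 : (Y + 1) ^ 2 = (b - a) ^ 2 / b ^ 2 := by
    rw [hY]
    field_simp
    ring
  have G4 : X * Y = -(ζ ^ 2 * (ζ ^ 2 - κ ^ 2) ^ 2 * a) / ((κ ^ 2 * ζ ^ 2 - 1) ^ 2 * b) := by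
    rw [hX, hY]
    field_simp
  have G3 : η ^ 3 + 2 * (κ ^ 4 + 6 * κ ^ 2 - 3) * η ^ 2
        - 4 * (κ ^ 8 - 4 * κ ^ 6 + 2 * κ ^ 4 + 12 * κ ^ 2 - 3) * η
        - 8 * (κ ^ 2 + 1) ^ 2 * (κ ^ 8 + 14 * κ ^ 4 - 8 * κ ^ 2 + 1) =
      (-((a ^ 2 + b ^ 2) * (κ ^ 2 + 1) ^ 2) ^ 3
        + 2 * (κ ^ 4 + 6 * κ ^ 2 - 3) * ((a ^ 2 + b ^ 2) * (κ ^ 2 + 1) ^ 2) ^ 2 * (a * b)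
        + 4 * (κ ^ 8 - 4 * κ ^ 6 + 2 * κ ^ 4 + 12 * κ ^ 2 - 3) *
            ((a ^ 2 + b ^ 2) * (κ ^ 2 + 1) ^ 2) * (a * b) ^ 2
        - 8 * (κ ^ 2 + 1) ^ 2 * (κ ^ 8 + 14 * κ ^ 4 - 8 * κ ^ 2 + 1) * (a * b) ^ 3) /
      (a * b) ^ 3 := by
    rw [hηv]
    field_simp
    ring
  rw [hu4, G1, G2, G4, G3, merge_frac]
  have hD1 : (κ ^ 2 + 1) ^ 4 * ((κ ^ 2 * ζ ^ 2 - 1) ^ 4 * b ^ 2) ≠ 0 :=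
    mul_ne_zero (pow_ne_zero 4 hk2) (mul_ne_zero (pow_ne_zero 4 hden) (pow_ne_zero 2 hb))
  have hD2 : (κ ^ 2 * ζ ^ 2 - 1) ^ 2 * b * ((κ ^ 2 + 1) ^ 6 * (a * b) ^ 3) ≠ 0 :=
    mul_ne_zero (mul_ne_zero (pow_ne_zero 2 hden) hb)
      (mul_ne_zero (pow_ne_zero 6 hk2) (pow_ne_zero 3 (mul_ne_zero ha hb)))
  rw [div_add_div _ _ hD1 hD2, div_eq_zero_iff]
  exact Or.inl (by rw [ha_def, hb_def]; ring)
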